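/- Let q ≥ 2, w an odd prime, and n a positive integer with rad(n) | q^w - 1. Write n = w^{v_w(n)} · n₁ · n₂ where rad(n₁) | q-1, rad(n₂) | (q^w-1)/(q-1), and gcd(w, n₁n₂) = 1, assuming gcd(n, q-1, (q^w-1)/(q-1)) = w and v_w(n) < v_w(q^w - 1). Then gcd(n, q^w-1) = gcd(n/w, q-1) · gcd(n, (q^w-1)/(q-1)). -/
import Mathlib


theorem stmt_12 (q w n n₁ n₂ : ℕ) (hq : 2 ≤ q) (hw : w.Prime) (hodd : Odd w)
    (hn : 0 < n)
    (hrad : n.primeFactors.prod id ∣ (q ^ w - 1))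
    (hdecomp : n = w ^ (n.factorization w) * n₁ * n₂)
    (hn₁ : n₁.primeFactors.prod id ∣ (q - 1))
    (hn₂ : n₂.primeFactors.prod id ∣ ((q ^ w - 1) / (q - 1)))
    (hcopw : Nat.gcd w (n₁ * n₂) = 1)
    (hgcd : Nat.gcd n (Nat.gcd (q - 1) ((q ^ w - 1) / (q - 1))) = w)
    (hval : n.factorization w < (q ^ w - 1).factorization w) :
    Nat.gcd n (q ^ w - 1) =
      Nat.gcd (n / w) (q - 1) * Nat.gcd n ((q ^ w - 1) / (q - 1)) := by
  set Q := (q ^ w - 1) / (q - 1) with hQdef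
  have hwpos : 0 < w := hw.pos
  have hqw : q ≤ q ^ w := Nat.le_self_pow hwpos.ne' q
  have hdvd : q - 1 ∣ q ^ w - 1 := by simpa using Nat.sub_dvd_pow_sub_pow q 1 w
  have hM : q ^ w - 1 = (q - 1) * Q := (Nat.mul_div_cancel' hdvd).symm
  have hQpos : 0 < Q := Nat.div_pos (Nat.le_of_dvd (by omega) hdvd) (by omega)
  have hwgcd : w ∣ Nat.gcd (q - 1) Q := hgcd ▸ Nat.gcd_dvd_right _ _
  have hwq1 : w ∣ q - 1 := hwgcd.trans (Nat.gcd_dvd_left _ _)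
  have hwQ : w ∣ Q := hwgcd.trans (Nat.gcd_dvd_right _ _)
  have hwn : w ∣ n := hgcd ▸ Nat.gcd_dvd_left _ _
  have hnw : n = w * (n / w) := (Nat.mul_div_cancel' hwn).symm
  have hnwne : n / w ≠ 0 := by
    intro h; rw [h, Nat.mul_zero] at hnw; omega
  -- lifting the exponent
  haveI : Fact w.Prime := ⟨hw⟩
  have hwnq : ¬ w ∣ q := by
    intro h
    have h2 := Nat.dvd_sub h hwq1
    rw [Nat.sub_sub_self (by omega : 1 ≤ q)] at h2
    have h3 := Nat.le_of_dvd one_pos h2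
    have h4 := hw.one_lt
    omega
  have hlte : (q ^ w - 1).factorization w = (q - 1).factorization w + 1 := by
    rw [Nat.factorization_def _ hw, Nat.factorization_def _ hw]
    have := padicValNat.pow_sub_pow (p := w) hodd (x := q) (y := 1) (by omega)
      (by simpa using hwq1) hwnq (n := w) hwpos.ne'
    simpa [padicValNat.self hw.one_lt] using this
  have hfacM : ∀ p : ℕ, (q ^ w - 1).factorization p
      = (q - 1).factorization p + Q.factorization p := by
    intro p
    rw [hM, Nat.factorization_mul (by omega) hQpos.ne']
    simp
  have hCQ : Q.factorization w = 1 := by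
    have := hfacM w
    omega
  rw [Nat.eq_iff_prime_padicValNat_eq _ _
    (Nat.gcd_pos_of_pos_left _ hn).ne'
    (Nat.mul_ne_zero (Nat.gcd_pos_of_pos_right _ (by omega : 0 < q - 1)).ne'
      (Nat.gcd_pos_of_pos_left _ hn).ne')]
  intro p hp
  rw [← Nat.factorization_def _ hp, ← Nat.factorization_def _ hp]
  rw [Nat.factorization_mul (Nat.gcd_pos_of_pos_right _ (by omega : 0 < q - 1)).ne'
      (Nat.gcd_pos_of_pos_left _ hn).ne']
  rw [Nat.factorization_gcd hn.ne' (by omega : q ^ w - 1 ≠ 0),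
      Nat.factorization_gcd hnwne (by omega : q - 1 ≠ 0),
      Nat.factorization_gcd hn.ne' hQpos.ne']
  simp only [Finsupp.coe_add, Pi.add_apply, Finsupp.inf_apply]
  have hA : n.factorization p = w.factorization p + (n / w).factorization p := by
    conv_lhs => rw [hnw]
    rw [Nat.factorization_mul (by omega) hnwne]; simp
  have hMp := hfacM p
  rcases eq_or_ne p w with rfl | hpw
  · have hA1 : 0 < n.factorization p :=
      (hp.dvd_iff_one_le_factorization hn.ne').mp hwn
    rw [hw.factorization_self] at hA
    rw [hMp, hCQ] at hval ⊢
    omega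
  · have hwp : w.factorization p = 0 := by
      rw [hw.factorization, Finsupp.single_apply, if_neg (Ne.symm hpw)]
    rw [hwp, Nat.zero_add] at hA
    have hkey : n.factorization p = 0 ∨ (q - 1).factorization p = 0
        ∨ Q.factorization p = 0 := by
      by_contra h
      push_neg at h
      obtain ⟨h1, h2, h3⟩ := h
      have hpn : p ∣ n := (hp.dvd_iff_one_le_factorization hn.ne').mpr (by omega)
      have hpq : p ∣ q - 1 :=
        (hp.dvd_iff_one_le_factorization (by omega)).mpr (by omega)
      have hpQ : p ∣ Q := (hp.dvd_iff_one_le_factorization hQpos.ne').mpr (by omega)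
      have : p ∣ w := hgcd ▸ Nat.dvd_gcd hpn (Nat.dvd_gcd hpq hpQ)
      exact hpw ((Nat.prime_dvd_prime_iff_eq hp hw).mp this)
    rw [hMp, hA]
    omega
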